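/- Let H be a real Hilbert space and A : H → H be σ-strongly monotone and (1/β)-cocoercive with 0 < σ ≤ β. Then the reflected resolvent R_A = 2J_A − Id is δ-contractive with δ = √(1 − 4σ/(1 + 2σ + σβ)). -/
import Mathlib


open RealInnerProductSpace

theorem reflected_resolvent_contraction_sm_cocoercive
    {H : Type*} [NormedAddCommGroup H] [InnerProductSpace ℝ H]
    (σ β : ℝ) (hσ : 0 < σ) (hσβ : σ ≤ β)
    (A J : H → H)
    (hsm : ∀ x y : H, ⟪A x - A y, x - y⟫ ≥ σ * ‖x - y‖ ^ 2)
    (hcoco : ∀ x y : H, ⟪A x - A y, x - y⟫ ≥ (1 / β) * ‖A x - A y‖ ^ 2)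
    (hJ : ∀ x : H, J x + A (J x) = x) :
    (∀ x y : H, ‖((2 : ℝ) • J x - x) - ((2 : ℝ) • J y - y)‖ ≤
      Real.sqrt (1 - 4 * σ / (1 + 2 * σ + σ * β)) * ‖x - y‖) ∧
    Real.sqrt (1 - 4 * σ / (1 + 2 * σ + σ * β)) < 1 := by
  have hβ : 0 < β := lt_of_lt_of_le hσ hσβ
  have hD : 0 < 1 + 2 * σ + σ * β := by positivity
  set c : ℝ := 1 - 4 * σ / (1 + 2 * σ + σ * β) with hc
  have hc0 : 0 ≤ c := by
    rw [hc, sub_nonneg, div_le_one hD]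
    nlinarith [sq_nonneg (1 - σ)]
  have hc1 : c < 1 := by
    have : 0 < 4 * σ / (1 + 2 * σ + σ * β) := by positivity
    rw [hc]; linarith
  refine ⟨fun x y => ?_, by nlinarith [Real.sq_sqrt hc0, Real.sqrt_nonneg c]⟩
  set u : H := J x - J y with hu
  set v : H := A (J x) - A (J y) with hv
  have hxy : x - y = u + v := by
    calc x - y = (J x + A (J x)) - (J y + A (J y)) := by rw [hJ x, hJ y]
      _ = u + v := by rw [hu, hv]; abel
  have hdiff : ((2 : ℝ) • J x - x) - ((2 : ℝ) • J y - y) = u - v := by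
    have h : u - v = ((2 : ℝ) • J x - (J x + A (J x))) - ((2 : ℝ) • J y - (J y + A (J y))) := by
      rw [hu, hv]; module
    rw [hJ x, hJ y] at h
    exact h.symm
  have h1 : ⟪v, u⟫ ≥ σ * ‖u‖ ^ 2 := hsm (J x) (J y)
  have h2 : ⟪v, u⟫ ≥ (1 / β) * ‖v‖ ^ 2 := hcoco (J x) (J y)
  have hns : ‖u - v‖ ^ 2 = ‖u‖ ^ 2 - 2 * ⟪u, v⟫ + ‖v‖ ^ 2 := norm_sub_sq_real u v
  have hna : ‖u + v‖ ^ 2 = ‖u‖ ^ 2 + 2 * ⟪u, v⟫ + ‖v‖ ^ 2 := norm_add_sq_real u v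
  have hsym : ⟪u, v⟫ = ⟪v, u⟫ := real_inner_comm v u
  have key : (1 + 2 * σ + σ * β) * ‖u - v‖ ^ 2 ≤
      ((1 + 2 * σ + σ * β) - 4 * σ) * ‖u + v‖ ^ 2 := by
    have h2' : ‖v‖ ^ 2 ≤ β * ⟪v, u⟫ := by
      rw [ge_iff_le, one_div, inv_mul_le_iff₀ hβ] at h2; exact h2
    nlinarith [mul_le_mul_of_nonneg_left h2' hσ.le, h1]
  have hsq : ‖u - v‖ ^ 2 ≤ c * ‖u + v‖ ^ 2 := by
    have hceq : c = ((1 + 2 * σ + σ * β) - 4 * σ) / (1 + 2 * σ + σ * β) := by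
      rw [hc]; field_simp
    rw [hceq, div_mul_eq_mul_div, le_div_iff₀ hD]
    nlinarith [key]
  rw [hdiff, hxy]
  calc ‖u - v‖ = Real.sqrt (‖u - v‖ ^ 2) := by
        rw [Real.sqrt_sq (norm_nonneg _)]
    _ ≤ Real.sqrt (c * ‖u + v‖ ^ 2) := Real.sqrt_le_sqrt hsq
    _ = Real.sqrt c * ‖u + v‖ := by
        rw [Real.sqrt_mul hc0, Real.sqrt_sq (norm_nonneg _)]
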